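/- Let N ≥ 2 be an integer, m > 1, σ ∈ (−2, 0) and 1 < p < p_c(σ) := 1 − σ(m−1)/2, and consider the planar system ẏ = −(N−2)y − m y² − z, ż = z(σ + 2 − (m−p)y). Define the region S := {(y, z) : y < 0, z > 0, z > −(N−2)y − m y²}. Then: (i) at every point of S one has ẏ < 0 and ż > 0; (ii) S is positively invariant: any solution (y, z) with (y(t₀), z(t₀)) ∈ S stays in S for all later times in its maximal interval of existence; (iii) along any such solution, y(t) → −∞ and z(t) → +∞ as t approaches the right endpoint of the maximal interval of existence. -/

import Mathlib

open Real Filter Set Topology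

/-- The interval `[t₀, b)` with `b` an extended real. -/
def solDom (t₀ : ℝ) (b : EReal) : Set ℝ := {t : ℝ | t₀ ≤ t ∧ (t : EReal) < b}

/-- A solution of the planar system `ẏ = -(N-2)y - m y² - z`,
`ż = z(σ + 2 - (m-p)y)` on the set `s`. -/
def IsSolYZ (N : ℕ) (m σ p : ℝ) (s : Set ℝ) (y z : ℝ → ℝ) : Prop :=
  ∀ t ∈ s,
    HasDerivWithinAt y (-(((N : ℝ)) - 2) * y t - m * y t ^ 2 - z t) s t ∧
    HasDerivWithinAt z (z t * (σ + 2 - (m - p) * y t)) s t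

/-- The region `S = {(y, z) : y < 0, z > 0, z > -(N-2)y - m y²}`. -/
def regionS (N : ℕ) (m : ℝ) : Set (ℝ × ℝ) :=
  {q : ℝ × ℝ | q.1 < 0 ∧ 0 < q.2 ∧ -(((N : ℝ)) - 2) * q.1 - m * q.1 ^ 2 < q.2}

namespace InvAux

lemma solDom_top (t₀ : ℝ) : solDom t₀ ⊤ = Ici t₀ := by
  ext t; simp [solDom]

lemma solDom_coe (t₀ br : ℝ) : solDom t₀ (br : EReal) = Ico t₀ br := by
  ext t; simp [solDom, EReal.coe_lt_coe_iff]

lemma solDom_subset_Icc {t₀ : ℝ} {b : EReal} {t₁ : ℝ} (h : t₁ ∈ solDom t₀ b) :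
    Icc t₀ t₁ ⊆ solDom t₀ b := fun t ht =>
  ⟨ht.1, lt_of_le_of_lt (EReal.coe_le_coe_iff.2 ht.2) h.2⟩

lemma convex_solDom (t₀ : ℝ) (b : EReal) : Convex ℝ (solDom t₀ b) := by
  rw [convex_iff_ordConnected]
  exact ⟨fun x hx y hy z hz => ⟨le_trans hx.1 hz.1,
    lt_of_le_of_lt (EReal.coe_le_coe_iff.2 hz.2) hy.2⟩⟩

lemma mem_solDom_self {t₀ : ℝ} {b : EReal} (hb : (t₀ : EReal) < b) : t₀ ∈ solDom t₀ b :=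
  ⟨le_refl _, hb⟩

end InvAux

open InvAux

namespace InvAux

variable {N : ℕ} {m σ p : ℝ}

lemma isOpen_regionS (N : ℕ) (m : ℝ) : IsOpen (regionS N m) := by
  have h1 : IsOpen {q : ℝ × ℝ | q.1 < 0} := isOpen_lt continuous_fst continuous_const
  have h2 : IsOpen {q : ℝ × ℝ | 0 < q.2} := isOpen_lt continuous_const continuous_snd
  have h3 : IsOpen {q : ℝ × ℝ | -(((N : ℝ)) - 2) * q.1 - m * q.1 ^ 2 < q.2} :=
    isOpen_lt (by fun_prop) continuous_snd
  exact (h1.inter (h2.inter h3))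

lemma invariant (hN : 2 ≤ N) (hm : 1 < m) (hσ1 : -2 < σ) (hσ2 : σ < 0)
    (hp1 : 1 < p) (hp2 : p < 1 - σ * (m - 1) / 2)
    (t₀ : ℝ) (b : EReal) (hb : (t₀ : EReal) < b) (y z : ℝ → ℝ)
    (hsol : IsSolYZ N m σ p (solDom t₀ b) y z) (h0 : (y t₀, z t₀) ∈ regionS N m) :
    ∀ t ∈ solDom t₀ b, (y t, z t) ∈ regionS N m := by
  have hmp : 0 < m - p := by nlinarith
  have hσ : 0 < σ + 2 := by linarith
  have hN2 : (0:ℝ) ≤ (N:ℝ) - 2 := by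
    have : (2:ℝ) ≤ (N:ℝ) := by exact_mod_cast hN
    linarith
  by_contra hcon
  push_neg at hcon
  obtain ⟨t₂, ht₂s, ht₂⟩ := hcon
  set s := solDom t₀ b with hs
  set E : Set ℝ := {t | t ∈ s ∧ (y t, z t) ∉ regionS N m} with hE
  have hEne : E.Nonempty := ⟨t₂, ht₂s, ht₂⟩
  have hEbdd : BddBelow E := ⟨t₀, fun t ht => ht.1.1⟩
  set t₁ := sInf E with ht₁def
  have ht₁mem : ∀ e ∈ E, t₁ ≤ e := fun e he => csInf_le hEbdd he
  have ht₁lb : t₀ ≤ t₁ := le_csInf hEne fun e he => he.1.1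
  have ht₁s : t₁ ∈ s :=
    ⟨ht₁lb, lt_of_le_of_lt (EReal.coe_le_coe_iff.2 (ht₁mem t₂ ⟨ht₂s, ht₂⟩)) ht₂s.2⟩
  have hbefore : ∀ t, t₀ ≤ t → t < t₁ → (y t, z t) ∈ regionS N m := by
    intro t ht0 htt1
    by_contra hmem
    have hts : t ∈ s := ⟨ht0, lt_of_le_of_lt (EReal.coe_le_coe_iff.2 htt1.le) ht₁s.2⟩
    exact absurd (ht₁mem t ⟨hts, hmem⟩) (not_le.2 htt1)
  have ht₁notS : (y t₁, z t₁) ∉ regionS N m := by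
    intro hP
    have hyc : ContinuousWithinAt (fun t => (y t, z t)) s t₁ :=
      ((hsol t₁ ht₁s).1.continuousWithinAt.prodMk (hsol t₁ ht₁s).2.continuousWithinAt)
    have hev : ∀ᶠ t in 𝓝[s] t₁, (y t, z t) ∈ regionS N m :=
      hyc ((isOpen_regionS N m).mem_nhds hP)
    rw [eventually_nhdsWithin_iff] at hev
    rcases Metric.eventually_nhds_iff.1 hev with ⟨δ, hδ, hball⟩
    obtain ⟨e, heE, he⟩ := exists_lt_of_csInf_lt hEne (show sInf E < t₁ + δ by
      rw [← ht₁def]; linarith)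
    have het₁ : t₁ ≤ e := ht₁mem e heE
    have : (y e, z e) ∈ regionS N m := by
      refine hball ?_ heE.1
      rw [Real.dist_eq, abs_lt]
      constructor <;> linarith
    exact heE.2 this
  
  have ht01 : t₀ < t₁ := ht₁lb.lt_of_ne (fun h => ht₁notS (h ▸ h0))
  set D := Icc t₀ t₁ with hD
  have hDs : D ⊆ s := solDom_subset_Icc ht₁s
  have hIcos : Ico t₀ t₁ ⊆ s := fun x hx => hDs (Ico_subset_Icc_self hx)
  have hintD : interior D = Ioo t₀ t₁ := interior_Icc
  have hyD : ContinuousOn y D := fun t ht => ((hsol t (hDs ht)).1.continuousWithinAt).mono hDs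
  have hzD : ContinuousOn z D := fun t ht => ((hsol t (hDs ht)).2.continuousWithinAt).mono hDs
  have hPint : ∀ x ∈ Ioo t₀ t₁, (y x, z x) ∈ regionS N m := fun x hx => hbefore x hx.1.le hx.2
  have hyanti : StrictAntiOn y D := by
    refine strictAntiOn_of_hasDerivWithinAt_neg (convex_Icc _ _) hyD
      (f' := fun x => -(((N:ℝ)) - 2) * y x - m * y x ^ 2 - z x) ?_ ?_
    · intro x hx
      rw [hintD] at hx ⊢
      exact ((hsol x (hIcos (Ioo_subset_Ico_self hx))).1).mono
        (subset_trans Ioo_subset_Ico_self hIcos)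
    · intro x hx
      rw [hintD] at hx
      have hP := hPint x hx
      have := hP.2.2
      simp only [regionS, mem_setOf_eq] at hP
      linarith [hP.2.2]
  have hzmono : StrictMonoOn z D := by
    refine strictMonoOn_of_hasDerivWithinAt_pos (convex_Icc _ _) hzD
      (f' := fun x => z x * (σ + 2 - (m - p) * y x)) ?_ ?_
    · intro x hx
      rw [hintD] at hx ⊢
      exact ((hsol x (hIcos (Ioo_subset_Ico_self hx))).2).mono
        (subset_trans Ioo_subset_Ico_self hIcos)
    · intro x hx
      rw [hintD] at hx
      have hP := hPint x hx
      simp only [regionS, mem_setOf_eq] at hP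
      exact mul_pos hP.2.1 (by nlinarith [hP.1])
  have hy₁neg : y t₁ < 0 :=
    lt_trans (hyanti (left_mem_Icc.2 ht01.le) (right_mem_Icc.2 ht01.le) ht01) h0.1
  have hz₁pos : 0 < z t₁ :=
    lt_trans h0.2.1 (hzmono (left_mem_Icc.2 ht01.le) (right_mem_Icc.2 ht01.le) ht01)
  have hle : z t₁ ≤ -(((N:ℝ)) - 2) * y t₁ - m * y t₁ ^ 2 := by
    by_contra hgt
    push_neg at hgt
    exact ht₁notS ⟨hy₁neg, hz₁pos, hgt⟩
  set h : ℝ → ℝ := fun t => z t + (((N:ℝ)) - 2) * y t + m * y t ^ 2 with hhdef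
  have hht : ∀ t, t₀ ≤ t → t < t₁ → 0 < h t := by
    intro t h1 h2
    have hP := hbefore t h1 h2
    simp only [regionS, mem_setOf_eq] at hP
    simp only [hhdef]
    linarith [hP.2.2]
  have hconth : ContinuousWithinAt h s t₁ := by
    have hy := (hsol t₁ ht₁s).1.continuousWithinAt
    have hz := (hsol t₁ ht₁s).2.continuousWithinAt
    exact (hz.add (hy.const_mul (((N:ℝ)) - 2))).add ((hy.pow 2).const_mul m)
  have hneb : (𝓝[Ioo t₀ t₁] t₁).NeBot := right_nhdsWithin_Ioo_neBot ht01
  have hh₁ : 0 ≤ h t₁ := by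
    have htend : Tendsto h (𝓝[Ioo t₀ t₁] t₁) (𝓝 (h t₁)) :=
      hconth.mono_left (nhdsWithin_mono _ (fun x hx => hIcos (Ioo_subset_Ico_self hx)))
    exact ge_of_tendsto htend
      (eventually_nhdsWithin_of_forall (fun x hx => (hht x hx.1.le hx.2).le))
  have hh₁0 : h t₁ = 0 := le_antisymm (by simp only [hhdef]; linarith) hh₁
  have hy'val : -(((N:ℝ)) - 2) * y t₁ - m * y t₁ ^ 2 - z t₁ = 0 := by
    simp only [hhdef] at hh₁0
    linarith
  obtain ⟨hy', hz'⟩ := hsol t₁ ht₁s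
  have hdh : HasDerivWithinAt h (z t₁ * (σ + 2 - (m - p) * y t₁)) s t₁ := by
    have H := (hz'.add (hy'.const_mul (((N:ℝ)) - 2))).add ((hy'.pow 2).const_mul m)
    refine H.congr_deriv ?_
    linear_combination ((((N:ℝ)) - 2) + 2 * m * y t₁) * hy'val
  have hcpos : 0 < z t₁ * (σ + 2 - (m - p) * y t₁) := mul_pos hz₁pos (by nlinarith)
  have hdh' := hdh.mono hIcos
  rw [hasDerivWithinAt_iff_tendsto_slope] at hdh'
  have hdiff : Ico t₀ t₁ \ {t₁} = Ico t₀ t₁ := diff_singleton_eq_self (by simp)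
  rw [hdiff] at hdh'
  haveI : (𝓝[Ico t₀ t₁] t₁).NeBot := hneb.mono (nhdsWithin_mono _ Ioo_subset_Ico_self)
  have hle0 : ∀ x ∈ Ico t₀ t₁, slope h t₁ x ≤ 0 := by
    intro x hx
    have hxt : x - t₁ < 0 := sub_neg.2 hx.2
    have hhx : 0 < h x := hht x hx.1 hx.2
    rw [slope_def_field, hh₁0, sub_zero]
    exact le_of_lt (div_neg_of_pos_of_neg hhx hxt)
  have := le_of_tendsto hdh' (eventually_nhdsWithin_of_forall hle0)
  linarith

lemma mono_of_sol (hN : 2 ≤ N) (hm : 1 < m) (hσ1 : -2 < σ) (hσ2 : σ < 0)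
    (hp1 : 1 < p) (hp2 : p < 1 - σ * (m - 1) / 2)
    (t₀ : ℝ) (b : EReal) (hb : (t₀ : EReal) < b) (y z : ℝ → ℝ)
    (hsol : IsSolYZ N m σ p (solDom t₀ b) y z) (h0 : (y t₀, z t₀) ∈ regionS N m) :
    StrictAntiOn y (solDom t₀ b) ∧ StrictMonoOn z (solDom t₀ b) := by
  have hmp : 0 < m - p := by nlinarith
  have hreg := invariant hN hm hσ1 hσ2 hp1 hp2 t₀ b hb y z hsol h0
  have hconv := convex_solDom t₀ b
  constructor
  · refine strictAntiOn_of_hasDerivWithinAt_neg hconv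
      (fun t ht => (hsol t ht).1.continuousWithinAt)
      (f' := fun x => -(((N:ℝ)) - 2) * y x - m * y x ^ 2 - z x) ?_ ?_
    · intro x hx
      exact ((hsol x (interior_subset hx)).1).mono interior_subset
    · intro x hx
      have hP := hreg x (interior_subset hx)
      simp only [regionS, mem_setOf_eq] at hP
      linarith [hP.2.2]
  · refine strictMonoOn_of_hasDerivWithinAt_pos hconv
      (fun t ht => (hsol t ht).2.continuousWithinAt)
      (f' := fun x => z x * (σ + 2 - (m - p) * y x)) ?_ ?_
    · intro x hx
      exact ((hsol x (interior_subset hx)).2).mono interior_subset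
    · intro x hx
      have hP := hreg x (interior_subset hx)
      simp only [regionS, mem_setOf_eq] at hP
      exact mul_pos hP.2.1 (by nlinarith [hP.1])

lemma global_case (hN : 2 ≤ N) (hm : 1 < m) (hσ1 : -2 < σ) (hσ2 : σ < 0)
    (hp1 : 1 < p) (hp2 : p < 1 - σ * (m - 1) / 2)
    (t₀ : ℝ) (y z : ℝ → ℝ)
    (hsol : IsSolYZ N m σ p (solDom t₀ ⊤) y z) (h0 : (y t₀, z t₀) ∈ regionS N m) :
    Tendsto y atTop atBot ∧ Tendsto z atTop atTop := by
  have hmp : 0 < m - p := by nlinarith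
  have hσ : 0 < σ + 2 := by linarith
  have hN2 : (0:ℝ) ≤ (N:ℝ) - 2 := by
    have : (2:ℝ) ≤ (N:ℝ) := by exact_mod_cast hN
    linarith
  have hb : (t₀ : EReal) < ⊤ := by exact_mod_cast EReal.coe_lt_top t₀
  have hreg := invariant hN hm hσ1 hσ2 hp1 hp2 t₀ ⊤ hb y z hsol h0
  rw [solDom_top] at hsol hreg
  simp only [regionS, mem_setOf_eq] at hreg
  -- lower exponential bound for z
  have hL : MonotoneOn (fun t => Real.log (z t) - (σ + 2) * t) (Ici t₀) := by
    refine monotoneOn_of_hasDerivWithinAt_nonneg (convex_Ici t₀)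
      (fun t ht => (((hsol t ht).2.continuousWithinAt).log (ne_of_gt (hreg t ht).2.1)).sub
        (Continuous.continuousWithinAt (by fun_prop)))
      (f' := fun t => z t * (σ + 2 - (m - p) * y t) / z t - (σ + 2) * 1) ?_ ?_
    · intro t ht
      have ht' : t ∈ Ici t₀ := interior_subset ht
      exact (((hsol t ht').2.mono interior_subset).log (ne_of_gt (hreg t ht').2.1)).sub
        (((hasDerivWithinAt_id t _).const_mul (σ + 2)))
    · intro t ht
      have ht' : t ∈ Ici t₀ := interior_subset ht
      have hz := (hreg t ht').2.1
      have hy := (hreg t ht').1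
      have hzz : z t * (σ + 2 - (m - p) * y t) / z t = σ + 2 - (m - p) * y t := by
        field_simp
      rw [hzz]
      nlinarith
  have hzlb : ∀ t ∈ Ici t₀, Real.exp (Real.log (z t₀) + (σ + 2) * (t - t₀)) ≤ z t := by
    intro t ht
    have := hL (self_mem_Ici) ht ht
    have hzt : 0 < z t := (hreg t ht).2.1
    calc Real.exp (Real.log (z t₀) + (σ + 2) * (t - t₀)) ≤ Real.exp (Real.log (z t)) := by
          apply Real.exp_le_exp.2
          dsimp only at this
          linarith
      _ = z t := Real.exp_log hzt
  have hztop : Tendsto z atTop atTop := by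
    refine tendsto_atTop_mono' atTop
      (f₁ := fun t => Real.exp (Real.log (z t₀) + (σ + 2) * (t - t₀))) ?_ ?_
    · filter_upwards [eventually_ge_atTop t₀] with t ht
      exact hzlb t ht
    · apply Real.tendsto_exp_atTop.comp
      apply tendsto_atTop_add_const_left
      apply Tendsto.const_mul_atTop hσ
      exact tendsto_atTop_add_const_right _ _ tendsto_id
  refine ⟨?_, hztop⟩
  -- y goes to -infinity
  set C : ℝ := (((N:ℝ)) - 2) ^ 2 / (4 * m) + 1 with hC
  obtain ⟨T, hT⟩ : ∃ T, ∀ t ≥ T, t ≥ t₀ ∧ C + 1 ≤ z t := by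
    have h1 := hztop.eventually_ge_atTop (C + 1)
    have h2 := eventually_ge_atTop t₀
    obtain ⟨T, hT⟩ := (h2.and h1).exists_forall_of_atTop
    exact ⟨T, fun t ht => hT t ht⟩
  have hTt₀ : t₀ ≤ T := (hT T le_rfl).1
  have hanti : AntitoneOn (fun t => y t + t) (Ici T) := by
    refine antitoneOn_of_hasDerivWithinAt_nonpos (convex_Ici T)
      (fun t ht => ((hsol t (hTt₀.trans ht)).1.continuousWithinAt.mono
        (fun x hx => hTt₀.trans hx)).add (Continuous.continuousWithinAt (by fun_prop)))
      (f' := fun t => (-(((N:ℝ)) - 2) * y t - m * y t ^ 2 - z t) + 1) ?_ ?_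
    · intro t ht
      have ht' : t ∈ Ici t₀ := hTt₀.trans (interior_subset ht)
      exact (((hsol t ht').1).mono (fun x hx => hTt₀.trans (interior_subset hx))).add
        (hasDerivWithinAt_id t _)
    · intro t ht
      have ht' : t₀ ≤ t := hTt₀.trans (interior_subset ht)
      have hzt : C + 1 ≤ z t := (hT t (interior_subset ht)).2
      have hm0 : (0:ℝ) < m := by linarith
      have hphi : -(((N:ℝ)) - 2) * y t - m * y t ^ 2 ≤ C - 1 := by
        rw [hC]
        have h4 : (0:ℝ) < 4 * m := by linarith
        have hcan : (((N:ℝ)) - 2) ^ 2 / (4 * m) * (4 * m) = (((N:ℝ)) - 2) ^ 2 :=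
          div_mul_cancel₀ _ (ne_of_gt h4)
        nlinarith [sq_nonneg ((((N:ℝ)) - 2) + 2 * m * y t)]
      linarith
  have hyub : ∀ t ∈ Ici T, y t ≤ (y T + T) - t := by
    intro t ht
    have := hanti self_mem_Ici ht ht
    dsimp only at this
    linarith
  refine tendsto_atBot_mono' atTop (f₁ := fun t => (y T + T) - t) ?_ ?_
  · filter_upwards [eventually_ge_atTop T] with t ht
    exact hyub t ht
  · have h1 : Tendsto (fun t : ℝ => -t) atTop atBot := tendsto_neg_atBot_iff.mpr tendsto_id
    have := tendsto_atBot_add_const_left atTop (y T + T) h1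
    simpa [sub_eq_add_neg] using this

lemma extension (hN : 2 ≤ N) (hm : 1 < m) (hσ1 : -2 < σ) (hσ2 : σ < 0)
    (hp1 : 1 < p) (hp2 : p < 1 - σ * (m - 1) / 2)
    (t₀ br : ℝ) (h01 : t₀ < br) (y z : ℝ → ℝ)
    (hsol : IsSolYZ N m σ p (Ico t₀ br) y z)
    (hyanti : AntitoneOn y (Ico t₀ br))
    (hzmono : MonotoneOn z (Ico t₀ br))
    (hL : BddBelow (y '' Ioo t₀ br)) (hZbdd : BddAbove (z '' Ioo t₀ br)) :
    ∃ b' : ℝ, br < b' ∧ ∃ Y Z : ℝ → ℝ, IsSolYZ N m σ p (Ico t₀ b') Y Z ∧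
      Set.EqOn Y y (Ico t₀ br) ∧ Set.EqOn Z z (Ico t₀ br) := by
  have hne : (Ioo t₀ br).Nonempty := nonempty_Ioo.2 h01
  set yl := sInf (y '' Ioo t₀ br) with hyldef
  set zl := sSup (z '' Ioo t₀ br) with hzldef
  have hyt : Tendsto y (𝓝[<] br) (𝓝 yl) :=
    AntitoneOn.tendsto_nhdsWithin_Ioo_left hne (hyanti.mono Ioo_subset_Ico_self) hL
  have hzt : Tendsto z (𝓝[<] br) (𝓝 zl) :=
    MonotoneOn.tendsto_nhdsWithin_Ioo_left hne (hzmono.mono Ioo_subset_Ico_self) hZbdd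
  set v : ℝ × ℝ → ℝ × ℝ := fun q =>
    (-(((N:ℝ)) - 2) * q.1 - m * q.1 ^ 2 - q.2, q.2 * (σ + 2 - (m - p) * q.1)) with hvdef
  have hvCD : ContDiff ℝ 1 v := by
    apply ContDiff.prodMk <;> fun_prop
  obtain ⟨f, hf0, ε, hε, hfd⟩ :=
    ContDiffAt.exists_forall_mem_closedBall_exists_eq_forall_mem_Ioo_hasDerivAt₀
      (hvCD.contDiffAt : ContDiffAt ℝ 1 v (yl, zl)) br
  have hf1br : (f br).1 = yl := by rw [hf0]
  have hf2br : (f br).2 = zl := by rw [hf0]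
  have hfd1 : ∀ t ∈ Ioo (br - ε) (br + ε), HasDerivAt (fun s => (f s).1) (v (f t)).1 t := by
    intro t ht
    have h := (hfd t ht).hasFDerivAt.fst
    simpa using h.hasDerivAt
  have hfd2 : ∀ t ∈ Ioo (br - ε) (br + ε), HasDerivAt (fun s => (f s).2) (v (f t)).2 t := by
    intro t ht
    have h := (hfd t ht).hasFDerivAt.snd
    simpa using h.hasDerivAt
  set b' := br + ε / 2 with hb'def
  have hbrb' : br < b' := by rw [hb'def]; linarith
  set Y : ℝ → ℝ := fun t => if t < br then y t else (f t).1 with hYdef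
  set Z : ℝ → ℝ := fun t => if t < br then z t else (f t).2 with hZdef
  refine ⟨b', hbrb', Y, Z, ?_, fun x hx => if_pos hx.2, fun x hx => if_pos hx.2⟩
  intro t ht
  rcases lt_trichotomy t br with hlt | heq | hgt
  -- case t < br
  · have hset : Ico t₀ b' =ᶠ[𝓝 t] Ico t₀ br := by
      filter_upwards [Iio_mem_nhds hlt] with x (hx : x < br)
      simp only [mem_Ico, eq_iff_iff]
      exact ⟨fun h => ⟨h.1, hx⟩, fun h => ⟨h.1, hx.trans hbrb'⟩⟩
    have hYe : Y =ᶠ[𝓝 t] y := by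
      filter_upwards [Iio_mem_nhds hlt] with x hx
      exact if_pos hx
    have hZe : Z =ᶠ[𝓝 t] z := by
      filter_upwards [Iio_mem_nhds hlt] with x hx
      exact if_pos hx
    obtain ⟨h1, h2⟩ := hsol t ⟨ht.1, hlt⟩
    constructor
    · simp only [hYdef, hZdef, if_pos hlt]
      exact (hasDerivWithinAt_congr_set hset).2
        (h1.congr_of_eventuallyEq (hYe.filter_mono nhdsWithin_le_nhds) (if_pos hlt))
    · simp only [hYdef, hZdef, if_pos hlt]
      exact (hasDerivWithinAt_congr_set hset).2
        (h2.congr_of_eventuallyEq (hZe.filter_mono nhdsWithin_le_nhds) (if_pos hlt))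
  -- case t = br
  · subst heq
    have htIoo : t ∈ Ioo (t - ε) (t + ε) := ⟨by linarith, by linarith⟩
    have hIooM : Ioo t₀ t ∈ 𝓝[<] t := Ioo_mem_nhdsLT_of_mem ⟨h01, le_rfl⟩
    have hYbr : Y t = yl := by rw [hYdef]; simp only [lt_irrefl, if_false]; exact hf1br
    have hZbr : Z t = zl := by rw [hZdef]; simp only [lt_irrefl, if_false]; exact hf2br
    have hYdiff : DifferentiableOn ℝ Y (Ioo t₀ t) := by
      intro x hx
      have hdx := ((hsol x ⟨hx.1.le, hx.2⟩).1).hasDerivAt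
        (Ico_mem_nhds hx.1 hx.2)
      have : HasDerivAt Y (-(((N:ℝ)) - 2) * y x - m * y x ^ 2 - z x) x :=
        hdx.congr_of_eventuallyEq
          (by filter_upwards [Iio_mem_nhds hx.2] with u hu; exact if_pos hu)
      exact this.differentiableAt.differentiableWithinAt
    have hZdiff : DifferentiableOn ℝ Z (Ioo t₀ t) := by
      intro x hx
      have hdx := ((hsol x ⟨hx.1.le, hx.2⟩).2).hasDerivAt
        (Ico_mem_nhds hx.1 hx.2)
      have : HasDerivAt Z (z x * (σ + 2 - (m - p) * y x)) x :=
        hdx.congr_of_eventuallyEq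
          (by filter_upwards [Iio_mem_nhds hx.2] with u hu; exact if_pos hu)
      exact this.differentiableAt.differentiableWithinAt
    have hYcont : ContinuousWithinAt Y (Ioo t₀ t) t := by
      have h1 : Tendsto y (𝓝[Ioo t₀ t] t) (𝓝 yl) :=
        hyt.mono_left (nhdsWithin_mono _ Ioo_subset_Iio_self)
      have h2 : y =ᶠ[𝓝[Ioo t₀ t] t] Y := by
        filter_upwards [self_mem_nhdsWithin] with u hu
        exact (if_pos hu.2).symm
      unfold ContinuousWithinAt
      rw [hYbr]
      exact h1.congr' h2
    have hZcont : ContinuousWithinAt Z (Ioo t₀ t) t := by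
      have h1 : Tendsto z (𝓝[Ioo t₀ t] t) (𝓝 zl) :=
        hzt.mono_left (nhdsWithin_mono _ Ioo_subset_Iio_self)
      have h2 : z =ᶠ[𝓝[Ioo t₀ t] t] Z := by
        filter_upwards [self_mem_nhdsWithin] with u hu
        exact (if_pos hu.2).symm
      unfold ContinuousWithinAt
      rw [hZbr]
      exact h1.congr' h2
    have hc1lim : Tendsto (fun x => -(((N:ℝ)) - 2) * y x - m * y x ^ 2 - z x) (𝓝[<] t)
        (𝓝 (-(((N:ℝ)) - 2) * yl - m * yl ^ 2 - zl)) :=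
      ((hyt.const_mul _).sub ((hyt.pow 2).const_mul m)).sub hzt
    have hc2lim : Tendsto (fun x => z x * (σ + 2 - (m - p) * y x)) (𝓝[<] t)
        (𝓝 (zl * (σ + 2 - (m - p) * yl))) :=
      hzt.mul (tendsto_const_nhds.sub (hyt.const_mul (m - p)))
    have hYderiv : Tendsto (fun x => deriv Y x) (𝓝[<] t)
        (𝓝 (-(((N:ℝ)) - 2) * yl - m * yl ^ 2 - zl)) := by
      refine hc1lim.congr' ?_
      filter_upwards [hIooM] with x hx
      have hdx := ((hsol x ⟨hx.1.le, hx.2⟩).1).hasDerivAt (Ico_mem_nhds hx.1 hx.2)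
      have hdY : HasDerivAt Y (-(((N:ℝ)) - 2) * y x - m * y x ^ 2 - z x) x :=
        hdx.congr_of_eventuallyEq
          (by filter_upwards [Iio_mem_nhds hx.2] with u hu; exact if_pos hu)
      exact hdY.deriv.symm
    have hZderiv : Tendsto (fun x => deriv Z x) (𝓝[<] t)
        (𝓝 (zl * (σ + 2 - (m - p) * yl))) := by
      refine hc2lim.congr' ?_
      filter_upwards [hIooM] with x hx
      have hdx := ((hsol x ⟨hx.1.le, hx.2⟩).2).hasDerivAt (Ico_mem_nhds hx.1 hx.2)
      have hdZ : HasDerivAt Z (z x * (σ + 2 - (m - p) * y x)) x :=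
        hdx.congr_of_eventuallyEq
          (by filter_upwards [Iio_mem_nhds hx.2] with u hu; exact if_pos hu)
      exact hdZ.deriv.symm
    have hYleft : HasDerivWithinAt Y (-(((N:ℝ)) - 2) * yl - m * yl ^ 2 - zl) (Iic t) t :=
      hasDerivWithinAt_Iic_of_tendsto_deriv hYdiff hYcont hIooM hYderiv
    have hZleft : HasDerivWithinAt Z (zl * (σ + 2 - (m - p) * yl)) (Iic t) t :=
      hasDerivWithinAt_Iic_of_tendsto_deriv hZdiff hZcont hIooM hZderiv
    have hYright : HasDerivWithinAt Y (-(((N:ℝ)) - 2) * yl - m * yl ^ 2 - zl) (Ici t) t := by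
      have hd1 := (hfd1 t htIoo).hasDerivWithinAt (s := Ici t)
      have : (v (f t)).1 = -(((N:ℝ)) - 2) * yl - m * yl ^ 2 - zl := by
        rw [hvdef]; simp only; rw [hf1br, hf2br]
      rw [this] at hd1
      exact hd1.congr (fun x hx => if_neg (not_lt.2 hx)) (if_neg (lt_irrefl t))
    have hZright : HasDerivWithinAt Z (zl * (σ + 2 - (m - p) * yl)) (Ici t) t := by
      have hd2 := (hfd2 t htIoo).hasDerivWithinAt (s := Ici t)
      have : (v (f t)).2 = zl * (σ + 2 - (m - p) * yl) := by
        rw [hvdef]; simp only; rw [hf1br, hf2br]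
      rw [this] at hd2
      exact hd2.congr (fun x hx => if_neg (not_lt.2 hx)) (if_neg (lt_irrefl t))
    have hYfull := hYleft.union hYright
    have hZfull := hZleft.union hZright
    rw [Iic_union_Ici] at hYfull hZfull
    constructor
    · rw [hYbr, hZbr]
      exact hYfull.mono (subset_univ _)
    · rw [hYbr, hZbr]
      exact hZfull.mono (subset_univ _)
  -- case br < t
  · have htIoo : t ∈ Ioo (br - ε) (br + ε) := by
      constructor
      · linarith
      · have := ht.2
        rw [hb'def] at this
        linarith
    have hYe : (fun s => (f s).1) =ᶠ[𝓝 t] Y := by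
      filter_upwards [Ioi_mem_nhds hgt] with x hx
      exact (if_neg (not_lt.2 hx.le)).symm
    have hZe : (fun s => (f s).2) =ᶠ[𝓝 t] Z := by
      filter_upwards [Ioi_mem_nhds hgt] with x hx
      exact (if_neg (not_lt.2 hx.le)).symm
    have hYt : Y t = (f t).1 := if_neg (not_lt.2 hgt.le)
    have hZt : Z t = (f t).2 := if_neg (not_lt.2 hgt.le)
    constructor
    · rw [hYt, hZt]
      have := ((hfd1 t htIoo).congr_of_eventuallyEq hYe.symm).hasDerivWithinAt
        (s := Ico t₀ b')
      have hval : (v (f t)).1 = -(((N:ℝ)) - 2) * (f t).1 - m * (f t).1 ^ 2 - (f t).2 := rfl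
      rwa [hval] at this
    · rw [hYt, hZt]
      have := ((hfd2 t htIoo).congr_of_eventuallyEq hZe.symm).hasDerivWithinAt
        (s := Ico t₀ b')
      have hval : (v (f t)).2 = (f t).2 * (σ + 2 - (m - p) * (f t).1) := rfl
      rwa [hval] at this


lemma tendsto_atBot_of_unbdd {t₀ br : ℝ} {y : ℝ → ℝ} (hanti : AntitoneOn y (Ico t₀ br))
    (hub : ∀ L, ∃ t ∈ Ico t₀ br, y t < L) : Tendsto y (𝓝[<] br) atBot := by
  rw [tendsto_atBot]
  intro M
  obtain ⟨t, ht, hyt⟩ := hub M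
  filter_upwards [Ioo_mem_nhdsLT ht.2] with x hx
  exact (hanti ht ⟨ht.1.trans hx.1.le, hx.2⟩ hx.1.le).trans (le_of_lt hyt)

lemma tendsto_atTop_of_unbdd {t₀ br : ℝ} {z : ℝ → ℝ} (hmono : MonotoneOn z (Ico t₀ br))
    (hub : ∀ Z, ∃ t ∈ Ico t₀ br, Z < z t) : Tendsto z (𝓝[<] br) atTop := by
  rw [tendsto_atTop]
  intro M
  obtain ⟨t, ht, hzt⟩ := hub M
  filter_upwards [Ioo_mem_nhdsLT ht.2] with x hx
  exact (le_of_lt hzt).trans (hmono ht ⟨ht.1.trans hx.1.le, hx.2⟩ hx.1.le)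

/-- If `y` is bounded below, then `z` is bounded above on a finite interval. -/
lemma z_bdd_of_y_bdd (hN : 2 ≤ N) (hm : 1 < m) (hσ1 : -2 < σ) (hσ2 : σ < 0)
    (hp1 : 1 < p) (hp2 : p < 1 - σ * (m - 1) / 2)
    (t₀ br : ℝ) (h01 : t₀ < br) (y z : ℝ → ℝ)
    (hsol : IsSolYZ N m σ p (Ico t₀ br) y z)
    (hreg : ∀ t ∈ Ico t₀ br, y t < 0 ∧ 0 < z t ∧ -(((N:ℝ)) - 2) * y t - m * y t ^ 2 < z t)
    (L : ℝ) (hLy : ∀ t ∈ Ico t₀ br, L ≤ y t) :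
    ∃ Z, ∀ t ∈ Ico t₀ br, z t ≤ Z := by
  have hmp : 0 < m - p := by nlinarith
  have hσ : 0 < σ + 2 := by linarith
  set K : ℝ := σ + 2 + (m - p) * |L| with hK
  have hKpos : 0 < K := by
    have := abs_nonneg L
    nlinarith
  have hmono : MonotoneOn (fun t => K * t - Real.log (z t)) (Ico t₀ br) := by
    refine monotoneOn_of_hasDerivWithinAt_nonneg (convex_Ico t₀ br)
      (fun t ht => (Continuous.continuousWithinAt (by fun_prop)).sub
        (((hsol t ht).2.continuousWithinAt).log (ne_of_gt (hreg t ht).2.1)))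
      (f' := fun t => K * 1 - z t * (σ + 2 - (m - p) * y t) / z t) ?_ ?_
    · intro t ht
      have ht' : t ∈ Ico t₀ br := interior_subset ht
      exact (((hasDerivWithinAt_id t _).const_mul K)).sub
        (((hsol t ht').2.mono interior_subset).log (ne_of_gt (hreg t ht').2.1))
    · intro t ht
      have ht' : t ∈ Ico t₀ br := interior_subset ht
      have hz := (hreg t ht').2.1
      have hy := (hreg t ht').1
      have hyL := hLy t ht'
      have hzz : z t * (σ + 2 - (m - p) * y t) / z t = σ + 2 - (m - p) * y t := by
        field_simp
      rw [hzz, hK]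
      have hLabs : -|L| ≤ y t := (neg_abs_le L).trans hyL
      nlinarith
  refine ⟨Real.exp (Real.log (z t₀) + K * (br - t₀)), fun t ht => ?_⟩
  have h0 : t₀ ∈ Ico t₀ br := ⟨le_rfl, h01⟩
  have := hmono h0 ht ht.1
  dsimp only at this
  have hzt : 0 < z t := (hreg t ht).2.1
  calc z t = Real.exp (Real.log (z t)) := (Real.exp_log hzt).symm
    _ ≤ Real.exp (Real.log (z t₀) + K * (br - t₀)) := by
        apply Real.exp_le_exp.2
        nlinarith [ht.2, ht.1, hKpos]


/-- If `y → -∞` at a finite time `br`, then `z` cannot stay bounded. -/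
lemma z_unbdd (hN : 2 ≤ N) (hm : 1 < m) (hσ1 : -2 < σ) (hσ2 : σ < 0)
    (hp1 : 1 < p) (hp2 : p < 1 - σ * (m - 1) / 2)
    (t₀ br : ℝ) (h01 : t₀ < br) (y z : ℝ → ℝ)
    (hsol : IsSolYZ N m σ p (Ico t₀ br) y z)
    (hreg : ∀ t ∈ Ico t₀ br, y t < 0 ∧ 0 < z t ∧ -(((N:ℝ)) - 2) * y t - m * y t ^ 2 < z t)
    (hyanti : AntitoneOn y (Ico t₀ br))
    (hytend : Tendsto y (𝓝[<] br) atBot)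
    (Z : ℝ) (hZ : ∀ t ∈ Ico t₀ br, z t ≤ Z) : False := by
  have hmp : 0 < m - p := by nlinarith
  have hσ : 0 < σ + 2 := by linarith
  have hN2 : (0:ℝ) ≤ (N:ℝ) - 2 := by
    have : (2:ℝ) ≤ (N:ℝ) := by exact_mod_cast hN
    linarith
  have hZ0 : 0 < Z := lt_of_lt_of_le (hreg t₀ ⟨le_rfl, h01⟩).2.1 (hZ t₀ ⟨le_rfl, h01⟩)
  -- pick s₁ with y very negative
  obtain ⟨s₁, hys₁, hs₁⟩ :=
    ((hytend.eventually_lt_atBot (-Real.sqrt Z - 1)).and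
      (Ioo_mem_nhdsLT h01)).exists
  set J := Ico s₁ br with hJ
  have hs₁J : s₁ ∈ J := ⟨le_rfl, hs₁.2⟩
  have hJsub : J ⊆ Ico t₀ br := Ico_subset_Ico_left hs₁.1.le
  have hybound : ∀ t ∈ J, y t ≤ -Real.sqrt Z - 1 :=
    fun t ht => (hyanti ⟨hs₁.1.le, hs₁.2⟩ (hJsub ht) ht.1).trans hys₁.le
  have hysq : ∀ t ∈ J, Z ≤ y t ^ 2 := by
    intro t ht
    have h1 := hybound t ht
    nlinarith [Real.sq_sqrt hZ0.le, Real.sqrt_nonneg Z]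
  set C : ℝ := m + 1 with hC
  have hCpos : (0:ℝ) < C := by rw [hC]; linarith
  -- monotone barrier V
  have hVmono : MonotoneOn (fun t => -(y t)⁻¹ + C * t) J := by
    refine monotoneOn_of_hasDerivWithinAt_nonneg (convex_Ico s₁ br)
      (fun t ht => ((((hsol t (hJsub ht)).1.continuousWithinAt).mono hJsub).inv₀
        (ne_of_lt (hreg t (hJsub ht)).1)).neg.add
        (Continuous.continuousWithinAt (by fun_prop)))
      (f' := fun t => -(-(-(((N:ℝ)) - 2) * y t - m * y t ^ 2 - z t) / y t ^ 2) + C * 1) ?_ ?_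
    · intro t ht
      have ht' : t ∈ J := interior_subset ht
      exact ((((hsol t (hJsub ht')).1.mono (interior_subset.trans hJsub)).inv
        (ne_of_lt (hreg t (hJsub ht')).1)).neg).add
        ((hasDerivWithinAt_id t _).const_mul C)
    · intro t ht
      have ht' : t ∈ J := interior_subset ht
      have hy := (hreg t (hJsub ht')).1
      have hz := (hreg t (hJsub ht')).2.1
      have hzZ := hZ t (hJsub ht')
      have hsq := hysq t ht'
      have h2 : (0:ℝ) < y t ^ 2 := pow_two_pos_of_ne_zero (ne_of_lt hy)
      rw [neg_div, neg_neg, mul_one]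
      set A := -(((N:ℝ)) - 2) * y t - m * y t ^ 2 - z t with hA
      have key : A / y t ^ 2 + C = (A + C * y t ^ 2) / y t ^ 2 := by
        rw [add_div, mul_div_cancel_right₀ _ h2.ne']
      rw [key]
      apply div_nonneg _ h2.le
      rw [hA, hC]
      nlinarith
  -- V s ≤ C * (br - s)
  have hVle : ∀ s ∈ J, -(y s)⁻¹ ≤ C * (br - s) := by
    intro s hs
    have hinv : Tendsto (fun t => (y t)⁻¹) (𝓝[<] br) (𝓝 0) := by
      have hneg : Tendsto (fun t => -y t) (𝓝[<] br) atTop :=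
        tendsto_neg_atBot_atTop.comp hytend
      have h := (tendsto_inv_atTop_zero.comp hneg).neg
      simp only [Function.comp_def, inv_neg, neg_neg, neg_zero] at h
      exact h
    have hCt : Tendsto (fun t => C * t) (𝓝[<] br) (𝓝 (C * br)) :=
      ((continuous_const.mul continuous_id).tendsto br).mono_left nhdsWithin_le_nhds
    have htendV : Tendsto (fun t => -(y t)⁻¹ + C * t) (𝓝[<] br) (𝓝 (-0 + C * br)) :=
      hinv.neg.add hCt
    have hle := ge_of_tendsto htendV (by
      filter_upwards [Ioo_mem_nhdsLT hs.2] with x hx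
      exact hVmono hs ⟨hs.1.trans hx.1.le, hx.2⟩ hx.1.le)
    dsimp only at hle
    linarith
  -- log z grows at least like -log (br - t)
  have hGmono : MonotoneOn (fun t => Real.log (z t) + ((m - p) / C) * Real.log (br - t)) J := by
    refine monotoneOn_of_hasDerivWithinAt_nonneg (convex_Ico s₁ br)
      (fun t ht => (((hsol t (hJsub ht)).2.continuousWithinAt.mono hJsub).log
          (ne_of_gt (hreg t (hJsub ht)).2.1)).add
        ((((continuous_const.sub continuous_id).continuousWithinAt).log
          (ne_of_gt (sub_pos.2 ht.2))).const_mul _))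
      (f' := fun t => z t * (σ + 2 - (m - p) * y t) / z t +
        ((m - p) / C) * (-1 / (br - t))) ?_ ?_
    · intro t ht
      have ht' : t ∈ J := interior_subset ht
      refine (((hsol t (hJsub ht')).2.mono (interior_subset.trans hJsub)).log
        (ne_of_gt (hreg t (hJsub ht')).2.1)).add ?_
      exact ((((hasDerivWithinAt_id t _).const_sub br).log
        (ne_of_gt (sub_pos.2 ht'.2))).const_mul _)
    · intro t ht
      have ht' : t ∈ J := interior_subset ht
      have hy := (hreg t (hJsub ht')).1
      have hz := (hreg t (hJsub ht')).2.1
      have hd : (0:ℝ) < br - t := sub_pos.2 ht'.2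
      have hVt := hVle t ht'
      have hzz : z t * (σ + 2 - (m - p) * y t) / z t = σ + 2 - (m - p) * y t := by
        field_simp
      rw [hzz]
      set a : ℝ := -y t with ha
      have ha0 : 0 < a := by rw [ha]; linarith
      set d : ℝ := br - t with hd'
      have hinva : -(y t)⁻¹ = a⁻¹ := by rw [ha, inv_neg]
      rw [hinva] at hVt
      have h1 : 1 ≤ a * (C * d) := by
        have h3 := mul_le_mul_of_nonneg_left hVt ha0.le
        rw [mul_inv_cancel₀ (ne_of_gt ha0)] at h3
        linarith [h3]
      have hdu : d * d⁻¹ = 1 := mul_inv_cancel₀ (ne_of_gt hd)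
      have h2 : d⁻¹ ≤ a * C := by
        have h3 := mul_le_mul_of_nonneg_right h1 (inv_pos.2 hd).le
        rw [one_mul] at h3
        calc d⁻¹ ≤ a * (C * d) * d⁻¹ := h3
          _ = a * C * (d * d⁻¹) := by ring
          _ = a * C := by rw [hdu, mul_one]
      have h4 : ((m - p) / C) * d⁻¹ ≤ ((m - p) / C) * (a * C) :=
        mul_le_mul_of_nonneg_left h2 (by positivity)
      have h5 : ((m - p) / C) * (a * C) = (m - p) * a := by
        field_simp
      have h6 : (m - p) / C * (-1 / d) = -(((m - p) / C) * d⁻¹) := by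
        field_simp
      rw [h6]
      have h7 : σ + 2 - (m - p) * y t = σ + 2 + (m - p) * a := by rw [ha]; ring
      rw [h7]
      linarith
  -- blow-up of the lower bound
  set c : ℝ := (m - p) / C with hc
  have hcpos : 0 < c := by rw [hc]; positivity
  have hbrt : Tendsto (fun t : ℝ => br - t) (𝓝[<] br) (𝓝[>] 0) := by
    rw [tendsto_nhdsWithin_iff]
    constructor
    · have h : Tendsto (fun t : ℝ => br - t) (𝓝 br) (𝓝 (br - br)) :=
        (continuous_const.sub continuous_id).tendsto br
      simpa using h.mono_left nhdsWithin_le_nhds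
    · filter_upwards [self_mem_nhdsWithin] with x hx
      exact sub_pos.2 (mem_Iio.mp hx)
  have hlogbot : Tendsto (fun t => Real.log (br - t)) (𝓝[<] br) atBot :=
    Real.tendsto_log_nhdsGT_zero.comp hbrt
  set G := fun t => Real.log (z t) + c * Real.log (br - t) with hG
  have hlim : Tendsto (fun t => G s₁ - c * Real.log (br - t)) (𝓝[<] br) atTop := by
    have h3 : Tendsto (fun t => c * Real.log (br - t)) (𝓝[<] br) atBot :=
      hlogbot.const_mul_atBot hcpos
    have h4 : Tendsto (fun t => -(c * Real.log (br - t))) (𝓝[<] br) atTop :=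
      tendsto_neg_atBot_atTop.comp h3
    have h5 := tendsto_atTop_add_const_left _ (G s₁) h4
    simpa [sub_eq_add_neg] using h5
  obtain ⟨t, hgt, htIoo⟩ :=
    ((hlim.eventually_gt_atTop (Real.log Z)).and (Ioo_mem_nhdsLT hs₁.2)).exists
  have htJ : t ∈ J := ⟨htIoo.1.le, htIoo.2⟩
  have hGle : G s₁ ≤ G t := hGmono hs₁J htJ htIoo.1.le
  have hzpos : 0 < z t := (hreg t (hJsub htJ)).2.1
  have hzle : Real.log (z t) ≤ Real.log Z := Real.log_le_log hzpos (hZ t (hJsub htJ))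
  have hGt : G t = Real.log (z t) + c * Real.log (br - t) := rfl
  linarith [hGle, hgt, hzle, hGt]

end InvAux

/-- **Invariant region analysis in the plane `{w = 0}`.**
(i) the vector field points down-up (`ẏ < 0`, `ż > 0`) in `S`; (ii) `S` is
positively invariant; (iii) along any maximal solution starting in `S`,
`y → -∞` and `z → +∞` at the right endpoint of the maximal interval. -/
theorem invariant_region_w_eq_zero
    (N : ℕ) (hN : 2 ≤ N) (m σ p : ℝ)
    (hm : 1 < m) (hσ1 : -2 < σ) (hσ2 : σ < 0)
    (hp1 : 1 < p) (hp2 : p < 1 - σ * (m - 1) / 2) :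
    (∀ q ∈ regionS N m,
      -(((N : ℝ)) - 2) * q.1 - m * q.1 ^ 2 - q.2 < 0 ∧
      0 < q.2 * (σ + 2 - (m - p) * q.1)) ∧
    (∀ (t₀ : ℝ) (b : EReal), (t₀ : EReal) < b → ∀ y z : ℝ → ℝ,
      IsSolYZ N m σ p (solDom t₀ b) y z → (y t₀, z t₀) ∈ regionS N m →
      ∀ t ∈ solDom t₀ b, (y t, z t) ∈ regionS N m) ∧
    (∀ (t₀ : ℝ) (b : EReal), (t₀ : EReal) < b → ∀ y z : ℝ → ℝ,
      IsSolYZ N m σ p (solDom t₀ b) y z → (y t₀, z t₀) ∈ regionS N m →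
      (∀ b' : EReal, b < b' →
        ¬ ∃ y' z' : ℝ → ℝ, IsSolYZ N m σ p (solDom t₀ b') y' z' ∧
          Set.EqOn y' y (solDom t₀ b) ∧ Set.EqOn z' z (solDom t₀ b)) →
      ((b = ⊤ → Tendsto y atTop atBot ∧ Tendsto z atTop atTop) ∧
       (∀ br : ℝ, b = (br : EReal) →
         Tendsto y (𝓝[<] br) atBot ∧ Tendsto z (𝓝[<] br) atTop))) := by
  have hmp : 0 < m - p := by nlinarith
  have hσ : 0 < σ + 2 := by linarith
  refine ⟨?_, ?_, ?_⟩
  · rintro q ⟨hq1, hq2, hq3⟩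
    refine ⟨by linarith, mul_pos hq2 ?_⟩
    nlinarith [mul_pos hmp (neg_pos.2 hq1)]
  · intro t₀ b hb y z hsol h0
    exact InvAux.invariant hN hm hσ1 hσ2 hp1 hp2 t₀ b hb y z hsol h0
  · intro t₀ b hb y z hsol h0 hmax
    constructor
    · intro hbtop
      subst hbtop
      exact InvAux.global_case hN hm hσ1 hσ2 hp1 hp2 t₀ y z hsol h0
    · intro br hbr
      subst hbr
      have h01 : t₀ < br := EReal.coe_lt_coe_iff.1 hb
      have hreg := InvAux.invariant hN hm hσ1 hσ2 hp1 hp2 t₀ _ hb y z hsol h0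
      have hmono := InvAux.mono_of_sol hN hm hσ1 hσ2 hp1 hp2 t₀ _ hb y z hsol h0
      rw [InvAux.solDom_coe] at hsol hreg hmono
      simp only [regionS, Set.mem_setOf_eq] at hreg
      have hyanti : AntitoneOn y (Ico t₀ br) := fun a ha b' hb' hab => by
        rcases eq_or_lt_of_le hab with rfl | h
        · exact le_rfl
        · exact (hmono.1 ha hb' h).le
      have hzmono : MonotoneOn z (Ico t₀ br) := fun a ha b' hb' hab => by
        rcases eq_or_lt_of_le hab with rfl | h
        · exact le_rfl
        · exact (hmono.2 ha hb' h).le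
      have hyub : ∀ L, ∃ t ∈ Ico t₀ br, y t < L := by
        intro L
        by_contra hcon
        push_neg at hcon
        obtain ⟨Z, hZ⟩ := InvAux.z_bdd_of_y_bdd hN hm hσ1 hσ2 hp1 hp2 t₀ br h01 y z hsol
          hreg L hcon
        have hLb : BddBelow (y '' Ioo t₀ br) :=
          ⟨L, by rintro _ ⟨x, hx, rfl⟩; exact hcon x (Ioo_subset_Ico_self hx)⟩
        have hZb : BddAbove (z '' Ioo t₀ br) :=
          ⟨Z, by rintro _ ⟨x, hx, rfl⟩; exact hZ x (Ioo_subset_Ico_self hx)⟩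
        obtain ⟨b', hbb', Y, Z', hsolE, hYe, hZe⟩ :=
          InvAux.extension hN hm hσ1 hσ2 hp1 hp2 t₀ br h01 y z hsol hyanti hzmono hLb hZb
        refine hmax (b' : EReal) (EReal.coe_lt_coe_iff.2 hbb') ⟨Y, Z', ?_, ?_, ?_⟩
        · rw [InvAux.solDom_coe]; exact hsolE
        · rw [InvAux.solDom_coe]; exact hYe
        · rw [InvAux.solDom_coe]; exact hZe
      have hytend : Tendsto y (𝓝[<] br) atBot := InvAux.tendsto_atBot_of_unbdd hyanti hyub
      refine ⟨hytend, ?_⟩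
      have hzub : ∀ Z, ∃ t ∈ Ico t₀ br, Z < z t := by
        intro Z
        by_contra hcon
        push_neg at hcon
        exact InvAux.z_unbdd hN hm hσ1 hσ2 hp1 hp2 t₀ br h01 y z hsol hreg hyanti hytend Z hcon
      exact InvAux.tendsto_atTop_of_unbdd hzmono hzub
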